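/- Let (u_j^n)_{j∈ℤ, n≥0} be generated by the nonlocal scheme u_j^{n+1} = u_j^n − Δt Σ_{k=1}^{r∨1} W_k (g(u_j^n, u_{j+k}^n) − g(u_{j−k}^n, u_j^n)) from bounded initial data (u_j^0) of finite total variation, with B₁ = inf_j u_j^0, B₂ = sup_j u_j^0. Assume g is monotone (nondecreasing in its first argument, nonincreasing in its second), continuously differentiable on [B₁,B₂]², and the CFL condition (Δt/Δx)(sup_{[B₁,B₂]²}|∂₁g| + sup_{[B₁,B₂]²}|∂₂g|) ≤ 1 holds. Then the scheme is total variation diminishing: Σ_{j∈ℤ} |u_j^n − u_{j−1}^n| ≤ Σ_{j∈ℤ} |u_j^0 − u_{j−1}^0| for every n ≥ 0. -/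

import Mathlib

open MeasureTheory Real Set Filter Topology

noncomputable section

/-- The nonlocal entropy flux `q(a,b;c) = g(a ⊔ c, b ⊔ c) - g(a ⊓ c, b ⊓ c)`. -/
def entFlux (g : ℝ → ℝ → ℝ) (a b c : ℝ) : ℝ :=
  g (max a c) (max b c) - g (min a c) (min b c)

/-- An admissible nonlocal interaction kernel with horizon `δ`. -/
structure AdmissibleKernel (δ : ℝ) (ω : ℝ → ℝ) : Prop where
  nonneg : ∀ h, 0 ≤ ω h
  integrable : Integrable ω
  supp : ∀ h, h ∉ Set.Icc 0 δ → ω h = 0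
  normalized : (∫ h in (0:ℝ)..δ, ω h) = 1

/-- `r = ⌊δ / Δx⌋`. -/
def gridR (δ Δx : ℝ) : ℕ := ⌊δ / Δx⌋₊

/-- `r ∨ 1 = max r 1`. -/
def gridR1 (δ Δx : ℝ) : ℕ := max (gridR δ Δx) 1

/-- The quadrature weights `W_k`. -/
def qWeight (ω : ℝ → ℝ) (δ Δx : ℝ) (k : ℕ) : ℝ :=
  (1 / ((k : ℝ) * Δx)) * (∫ h in (((k : ℝ) - 1) * Δx)..((k : ℝ) * Δx), ω h)
    + (if k = gridR δ Δx then 1 else 0) / ((gridR1 δ Δx : ℝ) * Δx)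
        * (∫ h in ((gridR δ Δx : ℝ) * Δx)..δ, ω h)

/-- One step of the nonlocal scheme `H`. -/
def schemeStep (g : ℝ → ℝ → ℝ) (Δt : ℝ) (W : ℕ → ℝ) (R : ℕ) (v : ℤ → ℝ) (j : ℤ) : ℝ :=
  v j - Δt * ∑ k ∈ Finset.Icc 1 R,
    W k * (g (v j) (v (j + (k : ℤ))) - g (v (j - (k : ℤ))) (v j))

/-- Iterates of the nonlocal scheme. -/
def schemeSol (g : ℝ → ℝ → ℝ) (Δt : ℝ) (W : ℕ → ℝ) (R : ℕ) (v0 : ℤ → ℝ) : ℕ → ℤ → ℝ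
  | 0 => v0
  | n + 1 => schemeStep g Δt W R (schemeSol g Δt W R v0 n)

/-- Cell averages of the initial data. -/
def cellAvg (u₀ : ℝ → ℝ) (Δx : ℝ) (j : ℤ) : ℝ :=
  (1 / Δx) * ∫ x in (((j : ℝ) - 1/2) * Δx)..(((j : ℝ) + 1/2) * Δx), u₀ x

/-- The numerical solution of the nonlocal scheme with initial data `u₀`. -/
def numSol (g : ℝ → ℝ → ℝ) (ω : ℝ → ℝ) (δ Δx Δt : ℝ) (u₀ : ℝ → ℝ) : ℕ → ℤ → ℝ :=
  schemeSol g Δt (qWeight ω δ Δx) (gridR1 δ Δx) (cellAvg u₀ Δx)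

/-- Piecewise constant interpolant of a grid function. -/
def pcInterp (Δx Δt : ℝ) (v : ℕ → ℤ → ℝ) (x t : ℝ) : ℝ :=
  v ⌊t / Δt⌋₊ ⌊x / Δx + 1/2⌋

/-- The piecewise-constant numerical solution `u^{Δ,δ}`. -/
def numInterp (g : ℝ → ℝ → ℝ) (ω : ℝ → ℝ) (δ Δx Δt : ℝ) (u₀ : ℝ → ℝ) (x t : ℝ) : ℝ :=
  pcInterp Δx Δt (numSol g ω δ Δx Δt u₀) x t

/-- `h^Δ(h) = kΔx` for `h ∈ [(k-1)Δx, kΔx)`. -/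
def hDelta (Δx h : ℝ) : ℝ := ((⌊h / Δx⌋ : ℝ) + 1) * Δx

/-- Interpolant of the test function: affine in `x` on each grid cell, piecewise
constant in `t`. -/
def phiDelta (φ : ℝ → ℝ → ℝ) (Δx Δt : ℝ) (x t : ℝ) : ℝ :=
  φ (((⌊x / Δx + 1/2⌋ : ℝ) - 1/2) * Δx) ((⌊t / Δt⌋₊ : ℝ) * Δt)
    + ((x - ((⌊x / Δx + 1/2⌋ : ℝ) - 1/2) * Δx) / Δx)
      * (φ (((⌊x / Δx + 1/2⌋ : ℝ) + 1/2) * Δx) ((⌊t / Δt⌋₊ : ℝ) * Δt)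
          - φ (((⌊x / Δx + 1/2⌋ : ℝ) - 1/2) * Δx) ((⌊t / Δt⌋₊ : ℝ) * Δt))

/-- The `2r`-point numerical flux `𝕘`. -/
def bigFlux (g : ℝ → ℝ → ℝ) (W : ℕ → ℝ) (Δx : ℝ) (R : ℕ) (v : ℤ → ℝ) (j : ℤ) : ℝ :=
  ∑ k ∈ Finset.Icc 1 R, ∑ l ∈ Finset.Icc 1 k,
    g (v (j - (l : ℤ))) (v (j - (l : ℤ) + (k : ℤ))) * W k * Δx

/-- Supremum of `|∂₁ g|` over `[B₁,B₂] × [B₁,B₂]`. -/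
def supAbsDeriv1 (g : ℝ → ℝ → ℝ) (B₁ B₂ : ℝ) : ℝ :=
  sSup ((fun p : ℝ × ℝ => |derivWithin (fun a => g a p.2) (Set.Icc B₁ B₂) p.1|) ''
    (Set.Icc B₁ B₂ ×ˢ Set.Icc B₁ B₂))

/-- Supremum of `|∂₂ g|` over `[B₁,B₂] × [B₁,B₂]`. -/
def supAbsDeriv2 (g : ℝ → ℝ → ℝ) (B₁ B₂ : ℝ) : ℝ :=
  sSup ((fun p : ℝ × ℝ => |derivWithin (fun b => g p.1 b) (Set.Icc B₁ B₂) p.2|) ''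
    (Set.Icc B₁ B₂ ×ˢ Set.Icc B₁ B₂))

/-- Entropy solution of the nonlocal conservation law on `ℝ × [0,T]`. -/
structure IsEntropySolNonlocal (T δ : ℝ) (ω : ℝ → ℝ) (g : ℝ → ℝ → ℝ)
    (u₀ : ℝ → ℝ) (u : ℝ → ℝ → ℝ) : Prop where
  bounded : ∃ M, ∀ x t, |u x t| ≤ M
  integrable : ∀ t ∈ Set.Icc (0:ℝ) T, Integrable (fun x => u x t)
  contL1 : ∀ t₀ ∈ Set.Icc (0:ℝ) T,
    Tendsto (fun t => ∫ x : ℝ, |u x t - u x t₀|) (nhdsWithin t₀ (Set.Icc 0 T)) (nhds 0)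
  init : ∀ x, u x 0 = u₀ x
  entropy : ∀ φ : ℝ → ℝ → ℝ, ContDiff ℝ 1 (fun p : ℝ × ℝ => φ p.1 p.2) →
    HasCompactSupport (fun p : ℝ × ℝ => φ p.1 p.2) → (∀ x t, 0 ≤ φ x t) → ∀ c : ℝ,
    0 ≤ (∫ t in (0:ℝ)..T, ∫ x : ℝ, |u x t - c| * deriv (fun s => φ x s) t)
      + ∫ t in (0:ℝ)..T, ∫ x : ℝ, ∫ h in (0:ℝ)..δ,
          ((φ (x + h) t - φ x t) / h) * entFlux g (u x t) (u (x + h) t) c * ω h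

/-- Kruzhkov entropy solution of the local conservation law `u_t + f(u)_x = 0`. -/
structure IsEntropySolLocal (T : ℝ) (f : ℝ → ℝ) (u₀ : ℝ → ℝ) (u : ℝ → ℝ → ℝ) : Prop where
  bounded : ∃ M, ∀ x t, |u x t| ≤ M
  integrable : ∀ t ∈ Set.Icc (0:ℝ) T, Integrable (fun x => u x t)
  contL1 : ∀ t₀ ∈ Set.Icc (0:ℝ) T,
    Tendsto (fun t => ∫ x : ℝ, |u x t - u x t₀|) (nhdsWithin t₀ (Set.Icc 0 T)) (nhds 0)
  init : ∀ x, u x 0 = u₀ x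
  entropy : ∀ φ : ℝ → ℝ → ℝ, ContDiff ℝ 1 (fun p : ℝ × ℝ => φ p.1 p.2) →
    HasCompactSupport (fun p : ℝ × ℝ => φ p.1 p.2) → (∀ x t, 0 ≤ φ x t) → ∀ c : ℝ,
    0 ≤ ∫ t in (0:ℝ)..T, ∫ x : ℝ,
        (|u x t - c| * deriv (fun s => φ x s) t
          + Real.sign (u x t - c) * (f (u x t) - f c) * deriv (fun y => φ y t) x)


theorem supAbsDeriv1_nonneg (g : ℝ → ℝ → ℝ) (B₁ B₂ : ℝ) : 0 ≤ supAbsDeriv1 g B₁ B₂ :=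
  Real.sSup_nonneg fun x hx => by obtain ⟨p, _, rfl⟩ := hx; exact abs_nonneg _

theorem supAbsDeriv2_nonneg (g : ℝ → ℝ → ℝ) (B₁ B₂ : ℝ) : 0 ≤ supAbsDeriv2 g B₁ B₂ :=
  Real.sSup_nonneg fun x hx => by obtain ⟨p, _, rfl⟩ := hx; exact abs_nonneg _

theorem lip1 (B₁ B₂ : ℝ) (g : ℝ → ℝ → ℝ)
    (hgC1 : ContDiffOn ℝ 1 (fun p : ℝ × ℝ => g p.1 p.2) (Set.Icc B₁ B₂ ×ˢ Set.Icc B₁ B₂)) :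
    ∀ y ∈ Set.Icc B₁ B₂, ∀ x ∈ Set.Icc B₁ B₂, ∀ x' ∈ Set.Icc B₁ B₂,
      |g x y - g x' y| ≤ supAbsDeriv1 g B₁ B₂ * |x - x'| := by
  intro y hy x hx x' hx'
  rcases lt_or_ge B₁ B₂ with hlt | hge
  · -- nondegenerate case
    set I := Set.Icc B₁ B₂ with hI
    set K := I ×ˢ I with hK
    have hIu : UniqueDiffOn ℝ I := uniqueDiffOn_Icc hlt
    have hKu : UniqueDiffOn ℝ K := hIu.prod hIu
    have hKc : IsCompact K := isCompact_Icc.prod isCompact_Icc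
    have hdiff : DifferentiableOn ℝ (fun p : ℝ × ℝ => g p.1 p.2) K :=
      hgC1.differentiableOn one_ne_zero
    -- slice differentiability and derivative identification
    have hslice : ∀ b ∈ I, ∀ a ∈ I,
        HasDerivWithinAt (fun x => g x b)
          ((fderivWithin ℝ (fun p : ℝ × ℝ => g p.1 p.2) K (a, b)) (1, 0)) I a := by
      intro b hb a ha
      have hF : HasFDerivWithinAt (fun p : ℝ × ℝ => g p.1 p.2)
          (fderivWithin ℝ (fun p : ℝ × ℝ => g p.1 p.2) K (a, b)) K (a, b) :=
        (hdiff (a, b) ⟨ha, hb⟩).hasFDerivWithinAt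
      have hι : HasDerivWithinAt (fun x : ℝ => (x, b)) ((1:ℝ), (0:ℝ)) I a := by
        exact HasDerivWithinAt.prodMk (hasDerivWithinAt_id a I) (hasDerivWithinAt_const a I b)
      have hmaps : Set.MapsTo (fun x : ℝ => (x, b)) I K := fun x hx => ⟨hx, hb⟩
      have := hF.comp_hasDerivWithinAt a hι hmaps
      exact this
    have hsliceDiff : DifferentiableOn ℝ (fun x => g x y) I := fun a ha =>
      ((hslice y hy a ha).differentiableWithinAt).mono (le_refl I)
    have hderivEq : ∀ b ∈ I, ∀ a ∈ I, derivWithin (fun x => g x b) I a =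
        (fderivWithin ℝ (fun p : ℝ × ℝ => g p.1 p.2) K (a, b)) (1, 0) := by
      intro b hb a ha
      exact (hslice b hb a ha).derivWithin (hIu a ha)
    -- BddAbove of the image set
    have hcont : ContinuousOn (fun p : ℝ × ℝ =>
        ‖fderivWithin ℝ (fun q : ℝ × ℝ => g q.1 q.2) K p‖) K :=
      (hgC1.continuousOn_fderivWithin hKu le_rfl).norm
    obtain ⟨M, hM⟩ : ∃ M, ∀ p ∈ K,
        ‖fderivWithin ℝ (fun q : ℝ × ℝ => g q.1 q.2) K p‖ ≤ M := by
      rcases hKc.exists_bound_of_continuousOn (hgC1.continuousOn_fderivWithin hKu le_rfl) with ⟨M, hM⟩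
      exact ⟨M, hM⟩
    have hbdd : BddAbove ((fun p : ℝ × ℝ =>
        |derivWithin (fun a => g a p.2) I p.1|) '' K) := by
      refine ⟨M, ?_⟩
      rintro _ ⟨p, hp, rfl⟩
      dsimp only
      rw [hderivEq p.2 hp.2 p.1 hp.1]
      calc |(fderivWithin ℝ (fun q : ℝ × ℝ => g q.1 q.2) K p) (1, 0)|
          ≤ ‖fderivWithin ℝ (fun q : ℝ × ℝ => g q.1 q.2) K p‖ * ‖((1:ℝ), (0:ℝ))‖ :=
            (fderivWithin ℝ (fun q : ℝ × ℝ => g q.1 q.2) K p).le_opNorm _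
        _ ≤ M := by
            have : ‖((1:ℝ), (0:ℝ))‖ = 1 := by
              simp [Prod.norm_def]
            rw [this, mul_one]; exact hM p hp
    have hbound : ∀ a ∈ I, ‖derivWithin (fun x => g x y) I a‖ ≤ supAbsDeriv1 g B₁ B₂ := by
      intro a ha
      have : |derivWithin (fun x => g x y) I a| ∈
          ((fun p : ℝ × ℝ => |derivWithin (fun a => g a p.2) I p.1|) '' (I ×ˢ I)) :=
        ⟨(a, y), ⟨ha, hy⟩, rfl⟩
      exact le_csSup hbdd this
    have := Convex.norm_image_sub_le_of_norm_derivWithin_le hsliceDiff hbound (convex_Icc B₁ B₂) hx' hx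
    simpa [Real.norm_eq_abs] using this
  · -- degenerate: Icc is a subsingleton
    have : x = x' := le_antisymm (le_trans hx.2 (le_trans hge hx'.1)) (le_trans hx'.2 (le_trans hge hx.1))
    subst this
    simp [supAbsDeriv1_nonneg]

theorem lip2 (B₁ B₂ : ℝ) (g : ℝ → ℝ → ℝ)
    (hgC1 : ContDiffOn ℝ 1 (fun p : ℝ × ℝ => g p.1 p.2) (Set.Icc B₁ B₂ ×ˢ Set.Icc B₁ B₂)) :
    ∀ x ∈ Set.Icc B₁ B₂, ∀ y ∈ Set.Icc B₁ B₂, ∀ y' ∈ Set.Icc B₁ B₂,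
      |g x y - g x y'| ≤ supAbsDeriv2 g B₁ B₂ * |y - y'| := by
  intro x hx y hy y' hy'
  rcases lt_or_ge B₁ B₂ with hlt | hge
  · set I := Set.Icc B₁ B₂ with hI
    set K := I ×ˢ I with hK
    have hIu : UniqueDiffOn ℝ I := uniqueDiffOn_Icc hlt
    have hKu : UniqueDiffOn ℝ K := hIu.prod hIu
    have hKc : IsCompact K := isCompact_Icc.prod isCompact_Icc
    have hdiff : DifferentiableOn ℝ (fun p : ℝ × ℝ => g p.1 p.2) K :=
      hgC1.differentiableOn one_ne_zero
    have hslice : ∀ a ∈ I, ∀ b ∈ I,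
        HasDerivWithinAt (fun y => g a y)
          ((fderivWithin ℝ (fun p : ℝ × ℝ => g p.1 p.2) K (a, b)) (0, 1)) I b := by
      intro a ha b hb
      have hF : HasFDerivWithinAt (fun p : ℝ × ℝ => g p.1 p.2)
          (fderivWithin ℝ (fun p : ℝ × ℝ => g p.1 p.2) K (a, b)) K (a, b) :=
        (hdiff (a, b) ⟨ha, hb⟩).hasFDerivWithinAt
      have hι : HasDerivWithinAt (fun y : ℝ => (a, y)) ((0:ℝ), (1:ℝ)) I b :=
        HasDerivWithinAt.prodMk (hasDerivWithinAt_const b I a) (hasDerivWithinAt_id b I)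
      have hmaps : Set.MapsTo (fun y : ℝ => (a, y)) I K := fun z hz => ⟨ha, hz⟩
      exact hF.comp_hasDerivWithinAt b hι hmaps
    have hsliceDiff : DifferentiableOn ℝ (fun z => g x z) I := fun b hb =>
      (hslice x hx b hb).differentiableWithinAt
    have hderivEq : ∀ a ∈ I, ∀ b ∈ I, derivWithin (fun z => g a z) I b =
        (fderivWithin ℝ (fun p : ℝ × ℝ => g p.1 p.2) K (a, b)) (0, 1) := by
      intro a ha b hb
      exact (hslice a ha b hb).derivWithin (hIu b hb)
    obtain ⟨M, hM⟩ := hKc.exists_bound_of_continuousOn (hgC1.continuousOn_fderivWithin hKu le_rfl)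
    have hbdd : BddAbove ((fun p : ℝ × ℝ =>
        |derivWithin (fun b => g p.1 b) I p.2|) '' K) := by
      refine ⟨M, ?_⟩
      rintro _ ⟨p, hp, rfl⟩
      dsimp only
      rw [hderivEq p.1 hp.1 p.2 hp.2]
      calc |(fderivWithin ℝ (fun q : ℝ × ℝ => g q.1 q.2) K p) (0, 1)|
          ≤ ‖fderivWithin ℝ (fun q : ℝ × ℝ => g q.1 q.2) K p‖ * ‖((0:ℝ), (1:ℝ))‖ :=
            (fderivWithin ℝ (fun q : ℝ × ℝ => g q.1 q.2) K p).le_opNorm _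
        _ ≤ M := by
            have : ‖((0:ℝ), (1:ℝ))‖ = 1 := by simp [Prod.norm_def]
            rw [this, mul_one]; exact hM p hp
    have hbound : ∀ b ∈ I, ‖derivWithin (fun z => g x z) I b‖ ≤ supAbsDeriv2 g B₁ B₂ := by
      intro b hb
      exact le_csSup hbdd ⟨(x, b), ⟨hx, hb⟩, rfl⟩
    have := Convex.norm_image_sub_le_of_norm_derivWithin_le hsliceDiff hbound (convex_Icc B₁ B₂) hy' hy
    simpa [Real.norm_eq_abs] using this
  · have : y = y' := le_antisymm (le_trans hy.2 (le_trans hge hy'.1)) (le_trans hy'.2 (le_trans hge hy.1))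
    subst this
    simp [supAbsDeriv2_nonneg]

/-- slope of `g` in the first argument between `a` and `b`, at second argument `c`. -/
def dqA (g : ℝ → ℝ → ℝ) (a b c : ℝ) : ℝ := if a = b then 0 else (g a c - g b c) / (a - b)

/-- slope of `g` in the second argument between `a` and `b`, at first argument `c`. -/
def dqB (g : ℝ → ℝ → ℝ) (c a b : ℝ) : ℝ := if a = b then 0 else (g c a - g c b) / (a - b)

theorem dqA_mul (g : ℝ → ℝ → ℝ) (a b c : ℝ) : dqA g a b c * (a - b) = g a c - g b c := by
  unfold dqA
  rcases eq_or_ne a b with h | h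
  · simp [h]
  · rw [if_neg h, div_mul_cancel₀]
    exact sub_ne_zero.mpr h

theorem dqB_mul (g : ℝ → ℝ → ℝ) (c a b : ℝ) : dqB g c a b * (a - b) = g c a - g c b := by
  unfold dqB
  rcases eq_or_ne a b with h | h
  · simp [h]
  · rw [if_neg h, div_mul_cancel₀]
    exact sub_ne_zero.mpr h

theorem dqA_mem {B₁ B₂ L₁ : ℝ} {g : ℝ → ℝ → ℝ}
    (hL₁ : 0 ≤ L₁)
    (hg1 : ∀ a a' b, a ∈ Set.Icc B₁ B₂ → a' ∈ Set.Icc B₁ B₂ → b ∈ Set.Icc B₁ B₂ →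
      a ≤ a' → g a b ≤ g a' b)
    (hlip : ∀ y ∈ Set.Icc B₁ B₂, ∀ x ∈ Set.Icc B₁ B₂, ∀ x' ∈ Set.Icc B₁ B₂,
      |g x y - g x' y| ≤ L₁ * |x - x'|)
    {a b c : ℝ} (ha : a ∈ Set.Icc B₁ B₂) (hb : b ∈ Set.Icc B₁ B₂) (hc : c ∈ Set.Icc B₁ B₂) :
    dqA g a b c ∈ Set.Icc 0 L₁ := by
  unfold dqA
  rcases eq_or_ne a b with h | h
  · rw [if_pos h]; exact ⟨le_refl 0, hL₁⟩
  · rw [if_neg h]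
    have key : ∀ p q : ℝ, p ∈ Set.Icc B₁ B₂ → q ∈ Set.Icc B₁ B₂ → q < p →
        (g p c - g q c) / (p - q) ∈ Set.Icc 0 L₁ := by
      intro p q hp hq hlt
      have hpos : 0 < p - q := sub_pos.mpr hlt
      constructor
      · exact div_nonneg (sub_nonneg.mpr (hg1 q p c hq hp hc hlt.le)) hpos.le
      · rw [div_le_iff₀ hpos]
        calc g p c - g q c ≤ |g p c - g q c| := le_abs_self _
          _ ≤ L₁ * |p - q| := hlip c hc p hp q hq
          _ = L₁ * (p - q) := by rw [abs_of_pos hpos]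
    rcases h.lt_or_gt with hlt | hlt
    · have := key b a hb ha hlt
      have hrw : (g a c - g b c) / (a - b) = (g b c - g a c) / (b - a) := by
        rw [div_eq_div_iff (by linarith) (by linarith)]; ring
      rw [hrw]; exact this
    · exact key a b ha hb hlt

theorem dqB_mem {B₁ B₂ L₂ : ℝ} {g : ℝ → ℝ → ℝ}
    (hL₂ : 0 ≤ L₂)
    (hg2 : ∀ a b b', a ∈ Set.Icc B₁ B₂ → b ∈ Set.Icc B₁ B₂ → b' ∈ Set.Icc B₁ B₂ →
      b ≤ b' → g a b' ≤ g a b)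
    (hlip : ∀ x ∈ Set.Icc B₁ B₂, ∀ y ∈ Set.Icc B₁ B₂, ∀ y' ∈ Set.Icc B₁ B₂,
      |g x y - g x y'| ≤ L₂ * |y - y'|)
    {a b c : ℝ} (hc : c ∈ Set.Icc B₁ B₂) (ha : a ∈ Set.Icc B₁ B₂) (hb : b ∈ Set.Icc B₁ B₂) :
    dqB g c a b ∈ Set.Icc (-L₂) 0 := by
  unfold dqB
  rcases eq_or_ne a b with h | h
  · rw [if_pos h]; exact ⟨neg_nonpos.mpr hL₂, le_refl 0⟩
  · rw [if_neg h]
    have key : ∀ p q : ℝ, p ∈ Set.Icc B₁ B₂ → q ∈ Set.Icc B₁ B₂ → q < p →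
        (g c p - g c q) / (p - q) ∈ Set.Icc (-L₂) 0 := by
      intro p q hp hq hlt
      have hpos : 0 < p - q := sub_pos.mpr hlt
      constructor
      · rw [le_div_iff₀ hpos]
        have h1 : |g c p - g c q| ≤ L₂ * |p - q| := hlip c hc p hp q hq
        rw [abs_of_pos hpos] at h1
        have := neg_abs_le (g c p - g c q)
        nlinarith [abs_nonneg (g c p - g c q)]
      · exact div_nonpos_of_nonpos_of_nonneg (sub_nonpos.mpr (hg2 c q p hc hq hp hlt.le)) hpos.le
    rcases h.lt_or_gt with hlt | hlt
    · have := key b a hb ha hlt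
      have hrw : (g c a - g c b) / (a - b) = (g c b - g c a) / (b - a) := by
        rw [div_eq_div_iff (by linarith) (by linarith)]; ring
      rw [hrw]; exact this
    · exact key a b ha hb hlt

/-- Coefficient `P j k`: slope in the first argument. -/
def coefP (g : ℝ → ℝ → ℝ) (u v : ℤ → ℝ) (j : ℤ) (k : ℕ) : ℝ :=
  dqA g (u j) (v j) (u (j + (k : ℤ)))

/-- Coefficient `Q j k`: slope in the second argument. -/
def coefQ (g : ℝ → ℝ → ℝ) (u v : ℤ → ℝ) (j : ℤ) (k : ℕ) : ℝ :=
  dqB g (v j) (u (j + (k : ℤ))) (v (j + (k : ℤ)))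

/-- Coefficient of `u j - v j` in the incremental form of the scheme. -/
def coefC0 (g : ℝ → ℝ → ℝ) (Δt : ℝ) (W : ℕ → ℝ) (R : ℕ) (u v : ℤ → ℝ) (j : ℤ) : ℝ :=
  1 - Δt * ∑ k ∈ Finset.Icc 1 R,
      W k * (coefP g u v j k - coefQ g u v (j - (k : ℤ)) k)

theorem scheme_diff_identity (g : ℝ → ℝ → ℝ) (Δt : ℝ) (W : ℕ → ℝ) (R : ℕ)
    (u v : ℤ → ℝ) (j : ℤ) :
    schemeStep g Δt W R u j - schemeStep g Δt W R v j =
      coefC0 g Δt W R u v j * (u j - v j)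
      + ∑ k ∈ Finset.Icc 1 R,
          (Δt * W k * (-coefQ g u v j k) * (u (j + (k : ℤ)) - v (j + (k : ℤ)))
            + Δt * W k * coefP g u v (j - (k : ℤ)) k * (u (j - (k : ℤ)) - v (j - (k : ℤ)))) := by
  have fact1 : ∀ k : ℕ,
      g (u j) (u (j + (k : ℤ))) - g (v j) (v (j + (k : ℤ)))
        = coefP g u v j k * (u j - v j)
          + coefQ g u v j k * (u (j + (k : ℤ)) - v (j + (k : ℤ))) := by
    intro k
    unfold coefP coefQ
    rw [dqA_mul, dqB_mul]
    ring
  have fact2 : ∀ k : ℕ,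
      g (u (j - (k : ℤ))) (u j) - g (v (j - (k : ℤ))) (v j)
        = coefP g u v (j - (k : ℤ)) k * (u (j - (k : ℤ)) - v (j - (k : ℤ)))
          + coefQ g u v (j - (k : ℤ)) k * (u j - v j) := by
    intro k
    have hjk : j - (k : ℤ) + (k : ℤ) = j := by ring
    unfold coefP coefQ
    rw [hjk, dqA_mul, dqB_mul]
    ring
  have sumeq : (∑ k ∈ Finset.Icc 1 R,
        W k * (g (u j) (u (j + (k : ℤ))) - g (u (j - (k : ℤ))) (u j)))
      - ∑ k ∈ Finset.Icc 1 R,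
        W k * (g (v j) (v (j + (k : ℤ))) - g (v (j - (k : ℤ))) (v j))
      = ∑ k ∈ Finset.Icc 1 R,
        (W k * (coefP g u v j k - coefQ g u v (j - (k : ℤ)) k) * (u j - v j)
          + W k * coefQ g u v j k * (u (j + (k : ℤ)) - v (j + (k : ℤ)))
          - W k * coefP g u v (j - (k : ℤ)) k * (u (j - (k : ℤ)) - v (j - (k : ℤ)))) := by
    rw [← Finset.sum_sub_distrib]
    refine Finset.sum_congr rfl fun k _ => ?_
    linear_combination (W k) * fact1 k - (W k) * fact2 k
  simp only [schemeStep, coefC0]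
  have lhs_eq : (u j - Δt * ∑ k ∈ Finset.Icc 1 R,
        W k * (g (u j) (u (j + (k : ℤ))) - g (u (j - (k : ℤ))) (u j)))
      - (v j - Δt * ∑ k ∈ Finset.Icc 1 R,
        W k * (g (v j) (v (j + (k : ℤ))) - g (v (j - (k : ℤ))) (v j)))
      = (u j - v j) - Δt * ((∑ k ∈ Finset.Icc 1 R,
          W k * (g (u j) (u (j + (k : ℤ))) - g (u (j - (k : ℤ))) (u j)))
        - ∑ k ∈ Finset.Icc 1 R,
          W k * (g (v j) (v (j + (k : ℤ))) - g (v (j - (k : ℤ))) (v j))) := by ring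
  rw [lhs_eq, sumeq, Finset.mul_sum, sub_mul, one_mul, Finset.mul_sum, Finset.sum_mul]
  have h2 : ∀ k ∈ Finset.Icc 1 R,
      Δt * (W k * (coefP g u v j k - coefQ g u v (j - (k : ℤ)) k) * (u j - v j)
          + W k * coefQ g u v j k * (u (j + (k : ℤ)) - v (j + (k : ℤ)))
          - W k * coefP g u v (j - (k : ℤ)) k * (u (j - (k : ℤ)) - v (j - (k : ℤ))))
      = Δt * (W k * (coefP g u v j k - coefQ g u v (j - (k : ℤ)) k)) * (u j - v j)
        - (Δt * W k * (-coefQ g u v j k) * (u (j + (k : ℤ)) - v (j + (k : ℤ)))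
            + Δt * W k * coefP g u v (j - (k : ℤ)) k * (u (j - (k : ℤ)) - v (j - (k : ℤ)))) := by
    intro k _
    ring
  rw [Finset.sum_congr rfl h2, Finset.sum_sub_distrib]
  ring

theorem qWeight_nonneg {δ Δx : ℝ} (hδ : 0 < δ) (hΔx : 0 < Δx)
    {ω : ℝ → ℝ} (hω : AdmissibleKernel δ ω) (k : ℕ) : 0 ≤ qWeight ω δ Δx k := by
  unfold qWeight
  have h1 : (0:ℝ) ≤ ∫ h in (((k : ℝ) - 1) * Δx)..((k : ℝ) * Δx), ω h := by
    apply intervalIntegral.integral_nonneg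
    · nlinarith [Nat.cast_nonneg (α := ℝ) k]
    · intro x _; exact hω.nonneg x
  have h2 : (0:ℝ) ≤ ∫ h in ((gridR δ Δx : ℝ) * Δx)..δ, ω h := by
    apply intervalIntegral.integral_nonneg
    · have : (gridR δ Δx : ℝ) ≤ δ / Δx := Nat.floor_le (by positivity)
      calc (gridR δ Δx : ℝ) * Δx ≤ (δ / Δx) * Δx := by nlinarith
        _ = δ := div_mul_cancel₀ δ (ne_of_gt hΔx)
    · intro x _; exact hω.nonneg x
  have h3 : (0:ℝ) ≤ 1 / ((k : ℝ) * Δx) := by positivity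
  have h4 : (0:ℝ) ≤ (if k = gridR δ Δx then (1:ℝ) else 0) / ((gridR1 δ Δx : ℝ) * Δx) := by
    positivity
  positivity

theorem qWeight_sum_le {δ Δx : ℝ} (hδ : 0 < δ) (hΔx : 0 < Δx)
    {ω : ℝ → ℝ} (hω : AdmissibleKernel δ ω) :
    ∑ k ∈ Finset.Icc 1 (gridR1 δ Δx), qWeight ω δ Δx k ≤ 1 / Δx := by
  set r := gridR δ Δx with hr
  set R := gridR1 δ Δx with hR
  have hrle : (r : ℝ) * Δx ≤ δ := by
    have : (r : ℝ) ≤ δ / Δx := Nat.floor_le (by positivity)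
    calc (r : ℝ) * Δx ≤ (δ / Δx) * Δx := by nlinarith
      _ = δ := div_mul_cancel₀ δ (ne_of_gt hΔx)
  have hint : ∀ a b : ℝ, IntervalIntegrable ω volume a b := fun a b =>
    hω.integrable.intervalIntegrable
  -- termwise bound
  have hterm : ∀ k ∈ Finset.Icc 1 R, qWeight ω δ Δx k ≤
      (1 / Δx) * (∫ h in (((k : ℝ) - 1) * Δx)..((k : ℝ) * Δx), ω h)
        + (if k = r then 1 else 0) * ((1 / Δx) * (∫ h in ((r : ℝ) * Δx)..δ, ω h)) := by
    intro k hk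
    rw [Finset.mem_Icc] at hk
    have hk1 : 1 ≤ k := hk.1
    have hIk : (0:ℝ) ≤ ∫ h in (((k : ℝ) - 1) * Δx)..((k : ℝ) * Δx), ω h := by
      apply intervalIntegral.integral_nonneg
      · nlinarith [Nat.cast_nonneg (α := ℝ) k]
      · intro x _; exact hω.nonneg x
    have hIr : (0:ℝ) ≤ ∫ h in ((r : ℝ) * Δx)..δ, ω h := by
      apply intervalIntegral.integral_nonneg hrle
      intro x _; exact hω.nonneg x
    unfold qWeight
    rw [← hr, ← hR]
    gcongr ?_ + ?_
    · apply mul_le_mul_of_nonneg_right _ hIk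
      rw [div_le_div_iff₀ (by positivity) hΔx]
      have : (1:ℝ) ≤ (k:ℝ) := by exact_mod_cast hk1
      nlinarith
    · rcases eq_or_ne k r with h | h
      · simp only [if_pos h]
        have hR1 : (1:ℝ) ≤ (R:ℝ) := by
          exact_mod_cast Nat.one_le_iff_ne_zero.mpr (by simp [hR, gridR1])
        have hle : 1 / ((R:ℝ) * Δx) ≤ 1 / Δx := by
          rw [div_le_div_iff₀ (by positivity) hΔx]; nlinarith
        calc 1 / ((R:ℝ) * Δx) * ∫ h in ((r : ℝ) * Δx)..δ, ω h
            ≤ 1 / Δx * ∫ h in ((r : ℝ) * Δx)..δ, ω h := mul_le_mul_of_nonneg_right hle hIr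
          _ = 1 * (1 / Δx * ∫ h in ((r : ℝ) * Δx)..δ, ω h) := by ring
      · simp [if_neg h]
  have hbound := Finset.sum_le_sum hterm
  refine le_trans hbound ?_
  rw [Finset.sum_add_distrib]
  -- indicator sum
  have hindsum : ∑ k ∈ Finset.Icc 1 R,
      (if k = r then (1:ℝ) else 0) * ((1 / Δx) * (∫ h in ((r : ℝ) * Δx)..δ, ω h))
      = (if r ∈ Finset.Icc 1 R then (1:ℝ) else 0) * ((1 / Δx) * (∫ h in ((r : ℝ) * Δx)..δ, ω h)) := by
    simp only [ite_mul, one_mul, zero_mul]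
    rw [Finset.sum_ite_eq' (Finset.Icc 1 R) r
      (fun _ => (1 / Δx) * (∫ h in ((r : ℝ) * Δx)..δ, ω h))]
  rw [hindsum]
  -- telescoping sum
  have htel : ∑ k ∈ Finset.Icc 1 R, (1 / Δx) * (∫ h in (((k : ℝ) - 1) * Δx)..((k : ℝ) * Δx), ω h)
      = (1 / Δx) * ∫ h in (0:ℝ)..((R : ℝ) * Δx), ω h := by
    rw [← Finset.mul_sum]
    congr 1
    rw [← Finset.Ico_add_one_right_eq_Icc, Finset.sum_Ico_eq_sum_range]
    have : ∀ i ∈ Finset.range (R + 1 - 1),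
        (∫ h in (((1 + i : ℕ) : ℝ) - 1) * Δx..(((1 + i : ℕ) : ℝ) * Δx), ω h)
          = ∫ h in ((i : ℝ) * Δx)..(((i + 1 : ℕ) : ℝ) * Δx), ω h := by
      intro i _
      congr 1 <;> push_cast <;> ring
    rw [Finset.sum_congr rfl this]
    simp only [Nat.add_sub_cancel]
    have := intervalIntegral.sum_integral_adjacent_intervals
      (a := fun i : ℕ => (i : ℝ) * Δx) (n := R) (fun k _ => hint _ _)
    simpa using this
  rw [htel]
  -- now split on r = 0 or not
  rcases Nat.eq_zero_or_pos r with hr0 | hrpos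
  · have hR1 : R = 1 := by simp [hR, gridR1, ← hr, hr0]
    have hnotmem : r ∉ Finset.Icc 1 R := by simp [hr0]
    rw [if_neg hnotmem, zero_mul, add_zero, hR1]
    have hδΔx : δ < Δx := by
      by_contra hcon
      push_neg at hcon
      have : 1 ≤ δ / Δx := (one_le_div hΔx).mpr hcon
      have h1 : 1 ≤ ⌊δ / Δx⌋₊ := Nat.le_floor (by exact_mod_cast this)
      have h0 : ⌊δ / Δx⌋₊ = 0 := hr0
      omega
    have hsplit : (∫ h in (0:ℝ)..(((1:ℕ) : ℝ) * Δx), ω h)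
        = (∫ h in (0:ℝ)..δ, ω h) + ∫ h in δ..(((1:ℕ) : ℝ) * Δx), ω h :=
      (intervalIntegral.integral_add_adjacent_intervals (hint _ _) (hint _ _)).symm
    have hzero : (∫ h in δ..(((1:ℕ) : ℝ) * Δx), ω h) = 0 := by
      rw [intervalIntegral.integral_of_le (by push_cast; linarith)]
      apply MeasureTheory.setIntegral_eq_zero_of_forall_eq_zero
      intro x hx
      exact hω.supp x (fun hmem => absurd hmem.2 (not_le.mpr hx.1))
    rw [hsplit, hzero, hω.normalized, add_zero, mul_one]
  · have hRr : R = r := by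
      simp only [hR, gridR1, ← hr]
      omega
    have hmem : r ∈ Finset.Icc 1 R := by
      rw [Finset.mem_Icc]; omega
    rw [if_pos hmem, one_mul, hRr, ← mul_add,
      intervalIntegral.integral_add_adjacent_intervals (hint _ _) (hint _ _),
      hω.normalized, mul_one]

theorem scheme_shift_comm (g : ℝ → ℝ → ℝ) (Δt : ℝ) (W : ℕ → ℝ) (R : ℕ)
    (w : ℤ → ℝ) (j : ℤ) :
    schemeStep g Δt W R (fun i => w (i - 1)) j = schemeStep g Δt W R w (j - 1) := by
  simp only [schemeStep]
  congr 1
  congr 1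
  apply Finset.sum_congr rfl
  intro k _
  have e1 : j + (k : ℤ) - 1 = j - 1 + (k : ℤ) := by ring
  have e2 : j - (k : ℤ) - 1 = j - 1 - (k : ℤ) := by ring
  rw [e1, e2]

theorem scheme_const (g : ℝ → ℝ → ℝ) (Δt : ℝ) (W : ℕ → ℝ) (R : ℕ) (c : ℝ) (j : ℤ) :
    schemeStep g Δt W R (fun _ => c) j = c := by
  simp [schemeStep]

theorem scheme_core
    (δ Δx Δt B₁ B₂ : ℝ) (hδ : 0 < δ) (hΔx : 0 < Δx) (hΔt : 0 < Δt)
    (ω : ℝ → ℝ) (hω : AdmissibleKernel δ ω)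
    (g : ℝ → ℝ → ℝ)
    (hg1 : ∀ a a' b, a ∈ Set.Icc B₁ B₂ → a' ∈ Set.Icc B₁ B₂ → b ∈ Set.Icc B₁ B₂ →
      a ≤ a' → g a b ≤ g a' b)
    (hg2 : ∀ a b b', a ∈ Set.Icc B₁ B₂ → b ∈ Set.Icc B₁ B₂ → b' ∈ Set.Icc B₁ B₂ →
      b ≤ b' → g a b' ≤ g a b)
    (hgC1 : ContDiffOn ℝ 1 (fun p : ℝ × ℝ => g p.1 p.2) (Set.Icc B₁ B₂ ×ˢ Set.Icc B₁ B₂))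
    (hCFL : Δt / Δx * (supAbsDeriv1 g B₁ B₂ + supAbsDeriv2 g B₁ B₂) ≤ 1)
    (u v : ℤ → ℝ) (hu : ∀ j, u j ∈ Set.Icc B₁ B₂) (hv : ∀ j, v j ∈ Set.Icc B₁ B₂) :
    (∀ j, 0 ≤ coefC0 g Δt (qWeight ω δ Δx) (gridR1 δ Δx) u v j) ∧
    (∀ j, coefC0 g Δt (qWeight ω δ Δx) (gridR1 δ Δx) u v j ≤ 1) ∧
    (∀ j k, 0 ≤ Δt * qWeight ω δ Δx k * (-coefQ g u v j k)) ∧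
    (∀ j k, 0 ≤ Δt * qWeight ω δ Δx k * coefP g u v j k) ∧
    (∀ j k, Δt * qWeight ω δ Δx k * (-coefQ g u v j k) ≤
        Δt * qWeight ω δ Δx k * supAbsDeriv2 g B₁ B₂) ∧
    (∀ j k, Δt * qWeight ω δ Δx k * coefP g u v j k ≤
        Δt * qWeight ω δ Δx k * supAbsDeriv1 g B₁ B₂) := by
  set W := qWeight ω δ Δx with hW
  set R := gridR1 δ Δx with hR
  set L₁ := supAbsDeriv1 g B₁ B₂ with hL₁def
  set L₂ := supAbsDeriv2 g B₁ B₂ with hL₂def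
  have hL₁ : 0 ≤ L₁ := supAbsDeriv1_nonneg g B₁ B₂
  have hL₂ : 0 ≤ L₂ := supAbsDeriv2_nonneg g B₁ B₂
  have hlip1 := lip1 B₁ B₂ g hgC1
  have hlip2 := lip2 B₁ B₂ g hgC1
  have hP : ∀ j k, coefP g u v j k ∈ Set.Icc 0 L₁ := fun j k =>
    dqA_mem hL₁ hg1 (fun y hy x hx x' hx' => hlip1 y hy x hx x' hx')
      (hu j) (hv j) (hu (j + (k : ℤ)))
  have hQ : ∀ j k, coefQ g u v j k ∈ Set.Icc (-L₂) 0 := fun j k =>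
    dqB_mem hL₂ hg2 (fun x hx y hy y' hy' => hlip2 x hx y hy y' hy')
      (hv j) (hu (j + (k : ℤ))) (hv (j + (k : ℤ)))
  have hWnn : ∀ k, 0 ≤ W k := fun k => qWeight_nonneg hδ hΔx hω k
  have hWs : ∑ k ∈ Finset.Icc 1 R, W k ≤ 1 / Δx := qWeight_sum_le hδ hΔx hω
  have hWsnn : 0 ≤ ∑ k ∈ Finset.Icc 1 R, W k := Finset.sum_nonneg fun k _ => hWnn k
  have hCFL2 : Δt * ((∑ k ∈ Finset.Icc 1 R, W k) * (L₁ + L₂)) ≤ 1 := by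
    calc Δt * ((∑ k ∈ Finset.Icc 1 R, W k) * (L₁ + L₂))
        ≤ Δt * ((1 / Δx) * (L₁ + L₂)) := by
          apply mul_le_mul_of_nonneg_left _ hΔt.le
          exact mul_le_mul_of_nonneg_right hWs (by linarith)
      _ = Δt / Δx * (L₁ + L₂) := by ring
      _ ≤ 1 := hCFL
  have hterm_nn : ∀ j k, 0 ≤ W k * (coefP g u v j k - coefQ g u v (j - (k : ℤ)) k) := by
    intro j k
    have h1 := (hP j k).1
    have h2 := (hQ (j - (k : ℤ)) k).2
    exact mul_nonneg (hWnn k) (by linarith)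
  have hterm_le : ∀ j k, W k * (coefP g u v j k - coefQ g u v (j - (k : ℤ)) k)
      ≤ W k * (L₁ + L₂) := by
    intro j k
    have h1 := (hP j k).2
    have h2 := (hQ (j - (k : ℤ)) k).1
    exact mul_le_mul_of_nonneg_left (by linarith) (hWnn k)
  refine ⟨?_, ?_, ?_, ?_, ?_, ?_⟩
  · intro j
    have hsum : ∑ k ∈ Finset.Icc 1 R, W k * (coefP g u v j k - coefQ g u v (j - (k : ℤ)) k)
        ≤ ∑ k ∈ Finset.Icc 1 R, W k * (L₁ + L₂) :=
      Finset.sum_le_sum fun k _ => hterm_le j k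
    have h2 : Δt * ∑ k ∈ Finset.Icc 1 R, W k * (coefP g u v j k - coefQ g u v (j - (k : ℤ)) k)
        ≤ 1 := by
      calc Δt * ∑ k ∈ Finset.Icc 1 R, W k * (coefP g u v j k - coefQ g u v (j - (k : ℤ)) k)
          ≤ Δt * ∑ k ∈ Finset.Icc 1 R, W k * (L₁ + L₂) :=
            mul_le_mul_of_nonneg_left hsum hΔt.le
        _ = Δt * ((∑ k ∈ Finset.Icc 1 R, W k) * (L₁ + L₂)) := by
            rw [← Finset.sum_mul]
        _ ≤ 1 := hCFL2
    unfold coefC0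
    linarith
  · intro j
    have : 0 ≤ Δt * ∑ k ∈ Finset.Icc 1 R,
        W k * (coefP g u v j k - coefQ g u v (j - (k : ℤ)) k) :=
      mul_nonneg hΔt.le (Finset.sum_nonneg fun k _ => hterm_nn j k)
    unfold coefC0
    linarith
  · intro j k
    have := (hQ j k).2
    exact mul_nonneg (mul_nonneg hΔt.le (hWnn k)) (by linarith)
  · intro j k
    exact mul_nonneg (mul_nonneg hΔt.le (hWnn k)) (hP j k).1
  · intro j k
    have := (hQ j k).1
    exact mul_le_mul_of_nonneg_left (by linarith) (mul_nonneg hΔt.le (hWnn k))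
  · intro j k
    exact mul_le_mul_of_nonneg_left (hP j k).2 (mul_nonneg hΔt.le (hWnn k))

theorem scheme_mono
    (δ Δx Δt B₁ B₂ : ℝ) (hδ : 0 < δ) (hΔx : 0 < Δx) (hΔt : 0 < Δt)
    (ω : ℝ → ℝ) (hω : AdmissibleKernel δ ω)
    (g : ℝ → ℝ → ℝ)
    (hg1 : ∀ a a' b, a ∈ Set.Icc B₁ B₂ → a' ∈ Set.Icc B₁ B₂ → b ∈ Set.Icc B₁ B₂ →
      a ≤ a' → g a b ≤ g a' b)
    (hg2 : ∀ a b b', a ∈ Set.Icc B₁ B₂ → b ∈ Set.Icc B₁ B₂ → b' ∈ Set.Icc B₁ B₂ →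
      b ≤ b' → g a b' ≤ g a b)
    (hgC1 : ContDiffOn ℝ 1 (fun p : ℝ × ℝ => g p.1 p.2) (Set.Icc B₁ B₂ ×ˢ Set.Icc B₁ B₂))
    (hCFL : Δt / Δx * (supAbsDeriv1 g B₁ B₂ + supAbsDeriv2 g B₁ B₂) ≤ 1)
    (u v : ℤ → ℝ) (hu : ∀ j, u j ∈ Set.Icc B₁ B₂) (hv : ∀ j, v j ∈ Set.Icc B₁ B₂)
    (hle : ∀ j, u j ≤ v j) :
    ∀ j, schemeStep g Δt (qWeight ω δ Δx) (gridR1 δ Δx) u j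
      ≤ schemeStep g Δt (qWeight ω δ Δx) (gridR1 δ Δx) v j := by
  intro j
  obtain ⟨hc0, _, hcp, hcm, _, _⟩ :=
    scheme_core δ Δx Δt B₁ B₂ hδ hΔx hΔt ω hω g hg1 hg2 hgC1 hCFL u v hu hv
  have hid := scheme_diff_identity g Δt (qWeight ω δ Δx) (gridR1 δ Δx) u v j
  have h1 : coefC0 g Δt (qWeight ω δ Δx) (gridR1 δ Δx) u v j * (u j - v j) ≤ 0 :=
    mul_nonpos_of_nonneg_of_nonpos (hc0 j) (by linarith [hle j])
  have h2 : ∑ k ∈ Finset.Icc 1 (gridR1 δ Δx),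
      (Δt * qWeight ω δ Δx k * (-coefQ g u v j k) * (u (j + (k : ℤ)) - v (j + (k : ℤ)))
        + Δt * qWeight ω δ Δx k * coefP g u v (j - (k : ℤ)) k
            * (u (j - (k : ℤ)) - v (j - (k : ℤ)))) ≤ 0 := by
    apply Finset.sum_nonpos
    intro k _
    have ha : Δt * qWeight ω δ Δx k * (-coefQ g u v j k)
        * (u (j + (k : ℤ)) - v (j + (k : ℤ))) ≤ 0 :=
      mul_nonpos_of_nonneg_of_nonpos (hcp j k) (by linarith [hle (j + (k : ℤ))])
    have hb : Δt * qWeight ω δ Δx k * coefP g u v (j - (k : ℤ)) k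
        * (u (j - (k : ℤ)) - v (j - (k : ℤ))) ≤ 0 :=
      mul_nonpos_of_nonneg_of_nonpos (hcm (j - (k : ℤ)) k) (by linarith [hle (j - (k : ℤ))])
    linarith
  linarith

theorem scheme_maxmin
    (δ Δx Δt B₁ B₂ : ℝ) (hδ : 0 < δ) (hΔx : 0 < Δx) (hΔt : 0 < Δt)
    (ω : ℝ → ℝ) (hω : AdmissibleKernel δ ω)
    (g : ℝ → ℝ → ℝ)
    (hg1 : ∀ a a' b, a ∈ Set.Icc B₁ B₂ → a' ∈ Set.Icc B₁ B₂ → b ∈ Set.Icc B₁ B₂ →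
      a ≤ a' → g a b ≤ g a' b)
    (hg2 : ∀ a b b', a ∈ Set.Icc B₁ B₂ → b ∈ Set.Icc B₁ B₂ → b' ∈ Set.Icc B₁ B₂ →
      b ≤ b' → g a b' ≤ g a b)
    (hgC1 : ContDiffOn ℝ 1 (fun p : ℝ × ℝ => g p.1 p.2) (Set.Icc B₁ B₂ ×ˢ Set.Icc B₁ B₂))
    (hCFL : Δt / Δx * (supAbsDeriv1 g B₁ B₂ + supAbsDeriv2 g B₁ B₂) ≤ 1)
    (v : ℤ → ℝ) (hv : ∀ j, v j ∈ Set.Icc B₁ B₂) :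
    ∀ j, schemeStep g Δt (qWeight ω δ Δx) (gridR1 δ Δx) v j ∈ Set.Icc B₁ B₂ := by
  intro j
  have hB : B₁ ∈ Set.Icc B₁ B₂ := ⟨le_refl _, le_trans (hv 0).1 (hv 0).2⟩
  have hB' : B₂ ∈ Set.Icc B₁ B₂ := ⟨le_trans (hv 0).1 (hv 0).2, le_refl _⟩
  constructor
  · have := scheme_mono δ Δx Δt B₁ B₂ hδ hΔx hΔt ω hω g hg1 hg2 hgC1 hCFL
      (fun _ => B₁) v (fun _ => hB) hv (fun i => (hv i).1) j
    rwa [scheme_const] at this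
  · have := scheme_mono δ Δx Δt B₁ B₂ hδ hΔx hΔt ω hω g hg1 hg2 hgC1 hCFL
      v (fun _ => B₂) hv (fun _ => hB') (fun i => (hv i).2) j
    rwa [scheme_const] at this

theorem scheme_contraction
    (δ Δx Δt B₁ B₂ : ℝ) (hδ : 0 < δ) (hΔx : 0 < Δx) (hΔt : 0 < Δt)
    (ω : ℝ → ℝ) (hω : AdmissibleKernel δ ω)
    (g : ℝ → ℝ → ℝ)
    (hg1 : ∀ a a' b, a ∈ Set.Icc B₁ B₂ → a' ∈ Set.Icc B₁ B₂ → b ∈ Set.Icc B₁ B₂ →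
      a ≤ a' → g a b ≤ g a' b)
    (hg2 : ∀ a b b', a ∈ Set.Icc B₁ B₂ → b ∈ Set.Icc B₁ B₂ → b' ∈ Set.Icc B₁ B₂ →
      b ≤ b' → g a b' ≤ g a b)
    (hgC1 : ContDiffOn ℝ 1 (fun p : ℝ × ℝ => g p.1 p.2) (Set.Icc B₁ B₂ ×ˢ Set.Icc B₁ B₂))
    (hCFL : Δt / Δx * (supAbsDeriv1 g B₁ B₂ + supAbsDeriv2 g B₁ B₂) ≤ 1)
    (u v : ℤ → ℝ) (hu : ∀ j, u j ∈ Set.Icc B₁ B₂) (hv : ∀ j, v j ∈ Set.Icc B₁ B₂)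
    (he : Summable fun j : ℤ => |u j - v j|) :
    Summable (fun j : ℤ => |schemeStep g Δt (qWeight ω δ Δx) (gridR1 δ Δx) u j
        - schemeStep g Δt (qWeight ω δ Δx) (gridR1 δ Δx) v j|) ∧
      (∑' j : ℤ, |schemeStep g Δt (qWeight ω δ Δx) (gridR1 δ Δx) u j
        - schemeStep g Δt (qWeight ω δ Δx) (gridR1 δ Δx) v j|) ≤ ∑' j : ℤ, |u j - v j| := by
  obtain ⟨hc0, hc0le, hcp, hcm, hcpb, hcmb⟩ :=
    scheme_core δ Δx Δt B₁ B₂ hδ hΔx hΔt ω hω g hg1 hg2 hgC1 hCFL u v hu hv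
  set W := qWeight ω δ Δx with hWdef
  set R := gridR1 δ Δx with hRdef
  set L₁ := supAbsDeriv1 g B₁ B₂ with hL₁def
  set L₂ := supAbsDeriv2 g B₁ B₂ with hL₂def
  -- pointwise bound
  have hpt : ∀ j : ℤ, |schemeStep g Δt W R u j - schemeStep g Δt W R v j|
      ≤ coefC0 g Δt W R u v j * |u j - v j|
        + ∑ k ∈ Finset.Icc 1 R,
          (Δt * W k * (-coefQ g u v j k) * |u (j + (k : ℤ)) - v (j + (k : ℤ))|
            + Δt * W k * coefP g u v (j - (k : ℤ)) k
                * |u (j - (k : ℤ)) - v (j - (k : ℤ))|) := by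
    intro j
    rw [scheme_diff_identity g Δt W R u v j]
    refine le_trans (abs_add_le _ _) (add_le_add ?_ ?_)
    · rw [abs_mul, abs_of_nonneg (hc0 j)]
    · refine le_trans (Finset.abs_sum_le_sum_abs _ _) (Finset.sum_le_sum fun k _ => ?_)
      refine le_trans (abs_add_le _ _) (add_le_add ?_ ?_)
      · rw [abs_mul, abs_of_nonneg (hcp j k)]
      · rw [abs_mul, abs_of_nonneg (hcm (j - (k : ℤ)) k)]
  -- summability of the pieces
  have hS0 : Summable (fun j : ℤ => coefC0 g Δt W R u v j * |u j - v j|) := by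
    refine Summable.of_nonneg_of_le
      (fun j => mul_nonneg (hc0 j) (abs_nonneg _)) (fun j => ?_) he
    exact mul_le_of_le_one_left (abs_nonneg _) (hc0le j)
  have hSp : ∀ k : ℕ, Summable (fun j : ℤ =>
      Δt * W k * (-coefQ g u v j k) * |u (j + (k : ℤ)) - v (j + (k : ℤ))|) := by
    intro k
    have h1 : Summable (fun j : ℤ => |u (j + (k : ℤ)) - v (j + (k : ℤ))|) :=
      he.comp_injective (add_left_injective (k : ℤ))
    refine Summable.of_nonneg_of_le
      (fun j => mul_nonneg (hcp j k) (abs_nonneg _)) (fun j => ?_)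
      (h1.mul_left (Δt * W k * L₂))
    exact mul_le_mul_of_nonneg_right (hcpb j k) (abs_nonneg _)
  have hSm : ∀ k : ℕ, Summable (fun j : ℤ =>
      Δt * W k * coefP g u v (j - (k : ℤ)) k * |u (j - (k : ℤ)) - v (j - (k : ℤ))|) := by
    intro k
    have h1 : Summable (fun j : ℤ => |u (j - (k : ℤ)) - v (j - (k : ℤ))|) :=
      he.comp_injective (Equiv.subRight (k : ℤ)).injective
    refine Summable.of_nonneg_of_le
      (fun j => mul_nonneg (hcm (j - (k : ℤ)) k) (abs_nonneg _)) (fun j => ?_)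
      (h1.mul_left (Δt * W k * L₁))
    exact mul_le_mul_of_nonneg_right (hcmb (j - (k : ℤ)) k) (abs_nonneg _)
  have hSin : Summable (fun j : ℤ => ∑ k ∈ Finset.Icc 1 R,
      (Δt * W k * (-coefQ g u v j k) * |u (j + (k : ℤ)) - v (j + (k : ℤ))|
        + Δt * W k * coefP g u v (j - (k : ℤ)) k
            * |u (j - (k : ℤ)) - v (j - (k : ℤ))|)) :=
    summable_sum fun k _ => (hSp k).add (hSm k)
  have hM : Summable (fun j : ℤ => coefC0 g Δt W R u v j * |u j - v j|
      + ∑ k ∈ Finset.Icc 1 R,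
        (Δt * W k * (-coefQ g u v j k) * |u (j + (k : ℤ)) - v (j + (k : ℤ))|
          + Δt * W k * coefP g u v (j - (k : ℤ)) k
              * |u (j - (k : ℤ)) - v (j - (k : ℤ))|)) := hS0.add hSin
  have hHsum : Summable (fun j : ℤ => |schemeStep g Δt W R u j - schemeStep g Δt W R v j|) :=
    Summable.of_nonneg_of_le (fun j => abs_nonneg _) hpt hM
  refine ⟨hHsum, ?_⟩
  refine le_trans (Summable.tsum_le_tsum hpt hHsum hM) (le_of_eq ?_)
  -- now compute the tsum of the majorant
  -- reindexed summands
  have hSp' : ∀ k : ℕ, Summable (fun j : ℤ =>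
      Δt * W k * (-coefQ g u v (j - (k : ℤ)) k) * |u j - v j|) := by
    intro k
    refine Summable.of_nonneg_of_le
      (fun j => mul_nonneg (hcp (j - (k : ℤ)) k) (abs_nonneg _)) (fun j => ?_)
      (he.mul_left (Δt * W k * L₂))
    exact mul_le_mul_of_nonneg_right (hcpb (j - (k : ℤ)) k) (abs_nonneg _)
  have hSm' : ∀ k : ℕ, Summable (fun j : ℤ =>
      Δt * W k * coefP g u v j k * |u j - v j|) := by
    intro k
    refine Summable.of_nonneg_of_le
      (fun j => mul_nonneg (hcm j k) (abs_nonneg _)) (fun j => ?_)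
      (he.mul_left (Δt * W k * L₁))
    exact mul_le_mul_of_nonneg_right (hcmb j k) (abs_nonneg _)
  -- reindexing identities
  have hreidxp : ∀ k : ℕ,
      (∑' j : ℤ, Δt * W k * (-coefQ g u v j k) * |u (j + (k : ℤ)) - v (j + (k : ℤ))|)
        = ∑' j : ℤ, Δt * W k * (-coefQ g u v (j - (k : ℤ)) k) * |u j - v j| := by
    intro k
    rw [← (Equiv.addRight (k : ℤ)).tsum_eq
      (fun j : ℤ => Δt * W k * (-coefQ g u v (j - (k : ℤ)) k) * |u j - v j|)]
    apply tsum_congr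
    intro j
    simp only [Equiv.coe_addRight, add_sub_cancel_right]
  have hreidxm : ∀ k : ℕ,
      (∑' j : ℤ, Δt * W k * coefP g u v (j - (k : ℤ)) k
          * |u (j - (k : ℤ)) - v (j - (k : ℤ))|)
        = ∑' j : ℤ, Δt * W k * coefP g u v j k * |u j - v j| := by
    intro k
    rw [← (Equiv.subRight (k : ℤ)).tsum_eq
      (fun j : ℤ => Δt * W k * coefP g u v j k * |u j - v j|)]
    apply tsum_congr
    intro j
    simp only [Equiv.subRight_apply]
  -- assemble
  calc (∑' j : ℤ, (coefC0 g Δt W R u v j * |u j - v j|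
        + ∑ k ∈ Finset.Icc 1 R,
          (Δt * W k * (-coefQ g u v j k) * |u (j + (k : ℤ)) - v (j + (k : ℤ))|
            + Δt * W k * coefP g u v (j - (k : ℤ)) k
                * |u (j - (k : ℤ)) - v (j - (k : ℤ))|)))
      = (∑' j : ℤ, coefC0 g Δt W R u v j * |u j - v j|)
        + ∑ k ∈ Finset.Icc 1 R,
          ((∑' j : ℤ, Δt * W k * (-coefQ g u v j k) * |u (j + (k : ℤ)) - v (j + (k : ℤ))|)
            + ∑' j : ℤ, Δt * W k * coefP g u v (j - (k : ℤ)) k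
                * |u (j - (k : ℤ)) - v (j - (k : ℤ))|) := by
        rw [Summable.tsum_add hS0 hSin, Summable.tsum_finsetSum fun k _ => (hSp k).add (hSm k)]
        congr 1
        exact Finset.sum_congr rfl fun k _ => Summable.tsum_add (hSp k) (hSm k)
    _ = (∑' j : ℤ, coefC0 g Δt W R u v j * |u j - v j|)
        + ∑ k ∈ Finset.Icc 1 R,
          ((∑' j : ℤ, Δt * W k * (-coefQ g u v (j - (k : ℤ)) k) * |u j - v j|)
            + ∑' j : ℤ, Δt * W k * coefP g u v j k * |u j - v j|) := by
        congr 1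
        exact Finset.sum_congr rfl fun k _ => by rw [hreidxp k, hreidxm k]
    _ = ∑' j : ℤ, (coefC0 g Δt W R u v j * |u j - v j|
        + ∑ k ∈ Finset.Icc 1 R,
          (Δt * W k * (-coefQ g u v (j - (k : ℤ)) k) * |u j - v j|
            + Δt * W k * coefP g u v j k * |u j - v j|)) := by
        rw [Summable.tsum_add hS0 (summable_sum fun k _ => (hSp' k).add (hSm' k)),
          Summable.tsum_finsetSum fun k _ => (hSp' k).add (hSm' k)]
        congr 1
        exact Finset.sum_congr rfl fun k _ => (Summable.tsum_add (hSp' k) (hSm' k)).symm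
    _ = ∑' j : ℤ, |u j - v j| := by
        apply tsum_congr
        intro j
        have hsum : ∑ k ∈ Finset.Icc 1 R,
            (Δt * W k * (-coefQ g u v (j - (k : ℤ)) k) * |u j - v j|
              + Δt * W k * coefP g u v j k * |u j - v j|)
            = (Δt * ∑ k ∈ Finset.Icc 1 R,
                W k * (coefP g u v j k - coefQ g u v (j - (k : ℤ)) k)) * |u j - v j| := by
          rw [Finset.mul_sum, Finset.sum_mul]
          exact Finset.sum_congr rfl fun k _ => by ring
        rw [hsum]
        unfold coefC0
        ring


/-- the nonlocal scheme is total variation diminishing. -/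
theorem discrete_TVD
    (δ Δx Δt B₁ B₂ : ℝ) (hδ : 0 < δ) (hΔx : 0 < Δx) (hΔt : 0 < Δt)
    (ω : ℝ → ℝ) (hω : AdmissibleKernel δ ω)
    (g : ℝ → ℝ → ℝ)
    (u : ℕ → ℤ → ℝ)
    (hrec : ∀ n, u (n + 1) = schemeStep g Δt (qWeight ω δ Δx) (gridR1 δ Δx) (u n))
    (hB₁ : IsGLB (Set.range (u 0)) B₁) (hB₂ : IsLUB (Set.range (u 0)) B₂)
    (hTV : Summable (fun j : ℤ => |u 0 j - u 0 (j - 1)|))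
    (hg1 : ∀ a a' b, a ∈ Set.Icc B₁ B₂ → a' ∈ Set.Icc B₁ B₂ → b ∈ Set.Icc B₁ B₂ →
      a ≤ a' → g a b ≤ g a' b)
    (hg2 : ∀ a b b', a ∈ Set.Icc B₁ B₂ → b ∈ Set.Icc B₁ B₂ → b' ∈ Set.Icc B₁ B₂ →
      b ≤ b' → g a b' ≤ g a b)
    (hgC1 : ContDiffOn ℝ 1 (fun p : ℝ × ℝ => g p.1 p.2) (Set.Icc B₁ B₂ ×ˢ Set.Icc B₁ B₂))
    (hCFL : Δt / Δx * (supAbsDeriv1 g B₁ B₂ + supAbsDeriv2 g B₁ B₂) ≤ 1)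
    :
    ∀ n, Summable (fun j : ℤ => |u n j - u n (j - 1)|) ∧
      ∑' j : ℤ, |u n j - u n (j - 1)| ≤ ∑' j : ℤ, |u 0 j - u 0 (j - 1)| := by
  have key : ∀ n, (∀ j, u n j ∈ Set.Icc B₁ B₂) ∧
      Summable (fun j : ℤ => |u n j - u n (j - 1)|) ∧
      ∑' j : ℤ, |u n j - u n (j - 1)| ≤ ∑' j : ℤ, |u 0 j - u 0 (j - 1)| := by
    intro n
    induction n with
    | zero =>
      exact ⟨fun j => ⟨hB₁.1 ⟨j, rfl⟩, hB₂.1 ⟨j, rfl⟩⟩, hTV, le_refl _⟩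
    | succ n ih =>
      obtain ⟨hbox, hsum, hle⟩ := ih
      have hbox' : ∀ j, u (n + 1) j ∈ Set.Icc B₁ B₂ := by
        rw [hrec n]
        exact scheme_maxmin δ Δx Δt B₁ B₂ hδ hΔx hΔt ω hω g hg1 hg2 hgC1 hCFL (u n) hbox
      have hv : ∀ j : ℤ, (fun i => u n (i - 1)) j ∈ Set.Icc B₁ B₂ := fun j => hbox (j - 1)
      have he : Summable fun j : ℤ => |u n j - (fun i => u n (i - 1)) j| := hsum
      obtain ⟨hs, hcon⟩ := scheme_contraction δ Δx Δt B₁ B₂ hδ hΔx hΔt ω hω g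
        hg1 hg2 hgC1 hCFL (u n) (fun i => u n (i - 1)) hbox hv he
      have hfun : (fun j : ℤ => |u (n + 1) j - u (n + 1) (j - 1)|)
          = fun j : ℤ => |schemeStep g Δt (qWeight ω δ Δx) (gridR1 δ Δx) (u n) j
              - schemeStep g Δt (qWeight ω δ Δx) (gridR1 δ Δx) (fun i => u n (i - 1)) j| := by
        funext j
        rw [hrec n, scheme_shift_comm]
      refine ⟨hbox', ?_, ?_⟩
      · rw [hfun]; exact hs
      · rw [hfun]
        exact le_trans hcon hle
  exact fun n => ⟨(key n).2.1, (key n).2.2⟩
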